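/- arXiv:2409.01431 — 2 statements merged into one kernel-verified Lean document; each statement's English description precedes it below -/
import Mathlib

section
/- For all nonnegative integers ℓ, r, k, the spectral radius of the caterpillar C(ℓ, r, k) satisfies λ1(C(ℓ,r,k)) < √(√(k² + 4) + 2). -/
open Classical
attribute [local instance] Classical.propDecidable

noncomputable section

/-- The list of eigenvalues of the adjacency matrix of `G` (with multiplicity),
sorted in ascending order. -/
def eigList {V : Type*} [Fintype V] [DecidableEq V] (G : SimpleGraph V) : List ℝ :=
  (Finset.univ.val.map (Matrix.IsHermitian.eigenvalues
    (by
      rw [Matrix.IsHermitian]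
      ext i j
      simp [Matrix.conjTranspose_apply, G.adj_comm j i] : (G.adjMatrix ℝ).IsHermitian))).sort (· ≤ ·)

/-- `lam G k` is the `k`-th largest eigenvalue (1-indexed, with multiplicity)
of the adjacency matrix of `G`; so `lam G 1 = λ₁(G)`, `lam G 2 = λ₂(G)`, etc. -/
def lam {V : Type*} [Fintype V] [DecidableEq V] (G : SimpleGraph V) (k : ℕ) : ℝ :=
  (eigList G).getD (Fintype.card V - k) 0

/-- `Phi G x = det (x I - A(G))`: the characteristic polynomial of the adjacency
matrix of `G`, evaluated at `x`. -/
def Phi {V : Type*} [Fintype V] [DecidableEq V] (G : SimpleGraph V) (x : ℝ) : ℝ :=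
  ((G.adjMatrix ℝ).charpoly).eval x

/-- The graph `G - a` obtained by deleting the vertex `a`. -/
def delVert {V : Type*} (G : SimpleGraph V) (a : V) : SimpleGraph {v : V // v ≠ a} :=
  G.induce {v : V | v ≠ a}

/-- The path graph `P_m` on `m` vertices `0 - 1 - ⋯ - (m-1)`. -/
def pathG (m : ℕ) : SimpleGraph (Fin m) :=
  SimpleGraph.fromRel (fun i j => i.val + 1 = j.val)

/-- The caterpillar `C(ℓ,r,k)`: the path `v_0 v_1 ⋯ v_{ℓ+r}` together with `k`
pendant leaves attached at the vertex `v_ℓ`. -/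
def caterpillar (l r k : ℕ) : SimpleGraph (Fin (l + r + k + 1)) :=
  SimpleGraph.fromRel (fun i j =>
    (i.val + 1 = j.val ∧ j.val ≤ l + r) ∨ (i.val = l ∧ l + r < j.val))

/-- The star `K_{1,n-1}`: vertex `0` adjacent to all other vertices. -/
def starG (n : ℕ) : SimpleGraph (Fin n) :=
  SimpleGraph.fromRel (fun i _ => i.val = 0)

/-- The double star `T(n-3,1)`: adjacent vertices `u = 0`, `v = 1`, where `u` has
the `n - 3` pendant leaves `2, …, n-2` and `v` has the single pendant leaf `n-1`. -/
def doubleStar (n : ℕ) : SimpleGraph (Fin n) :=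
  SimpleGraph.fromRel (fun i j =>
    (i.val = 0 ∧ 1 ≤ j.val ∧ j.val ≤ n - 2) ∨ (i.val = 1 ∧ j.val = n - 1))

/-- The caterpillar `T((n-3)/2, 0, (n-3)/2)`: a path `0 - 1 - 2` with `(n-3)/2`
pendant leaves attached at `0` and `(n-3)/2` pendant leaves attached at `2`. -/
def doubleBroom (n : ℕ) : SimpleGraph (Fin n) :=
  SimpleGraph.fromRel (fun i j =>
    (i.val = 0 ∧ j.val = 1) ∨ (i.val = 1 ∧ j.val = 2) ∨
    (i.val = 0 ∧ 3 ≤ j.val ∧ j.val < 3 + (n - 3) / 2) ∨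
    (i.val = 2 ∧ 3 + (n - 3) / 2 ≤ j.val))

/-- `(G1,a) ∘ (G2,b)`: the disjoint union of `G1` and `G2` together with the edge `ab`. -/
def connectRoots {V1 V2 : Type*} (G1 : SimpleGraph V1) (G2 : SimpleGraph V2) (a : V1) (b : V2) :
    SimpleGraph (V1 ⊕ V2) where
  Adj x y := match x, y with
    | .inl u, .inl v => G1.Adj u v
    | .inr u, .inr v => G2.Adj u v
    | .inl u, .inr v => u = a ∧ v = b
    | .inr u, .inl v => u = b ∧ v = a
  symm := by
    refine ⟨?_⟩
    rintro (u | u) (v | v) h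
    · exact G1.adj_symm h
    · exact ⟨h.2, h.1⟩
    · exact ⟨h.2, h.1⟩
    · exact G2.adj_symm h
  loopless := by
    refine ⟨?_⟩
    rintro (u | u) h
    · exact G1.irrefl h
    · exact G2.irrefl h

/-- `(G1,a) ∘ v ∘ (G2,b)`: the disjoint union of `G1` and `G2` together with a new
vertex (`none`) joined to exactly `a` and `b`. -/
def connectViaVertex {V1 V2 : Type*} (G1 : SimpleGraph V1) (G2 : SimpleGraph V2)
    (a : V1) (b : V2) : SimpleGraph (Option (V1 ⊕ V2)) where
  Adj x y := match x, y with
    | some (.inl u), some (.inl v) => G1.Adj u v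
    | some (.inr u), some (.inr v) => G2.Adj u v
    | none, some (.inl u) => u = a
    | some (.inl u), none => u = a
    | none, some (.inr u) => u = b
    | some (.inr u), none => u = b
    | _, _ => False
  symm := by
    refine ⟨?_⟩
    rintro (_ | (u | u)) (_ | (v | v)) h
    all_goals first
      | exact h.elim
      | exact h
      | exact G1.adj_symm h
      | exact G2.adj_symm h
  loopless := by
    refine ⟨?_⟩
    rintro (_ | (u | u)) h
    · exact h.elim
    · exact G1.irrefl h
    · exact G2.irrefl h

open Matrix

lemma lam_lt_of_subsolution {m : ℕ} (hm : 0 < m) (G : SimpleGraph (Fin m)) (c : ℝ)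
    (x : Fin m → ℝ) (hx : ∀ i, 0 < x i)
    (hle : ∀ i, ∑ j ∈ G.neighborFinset i, x j ≤ c * x i)
    (hstrict : ∑ j ∈ G.neighborFinset (⟨0, hm⟩ : Fin m), x j < c * x ⟨0, hm⟩)
    (hker : ∀ z : Fin m → ℝ, (∀ i, 0 ≤ z i) →
      (∀ i, ∑ j ∈ G.neighborFinset i, z j = c * z i) → z ⟨0, hm⟩ = 0 → ∀ i, z i = 0) :
    lam G 1 < c := by
  classical
  have hA : (G.adjMatrix ℝ).IsHermitian := by
    rw [Matrix.IsHermitian]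
    ext i j
    simp [Matrix.conjTranspose_apply, G.adj_comm j i]
  -- `lam G 1` is an eigenvalue
  have hlen : (eigList G).length = m := by
    rw [eigList, Multiset.length_sort, Multiset.card_map]
    simpa using (Finset.card_univ (α := Fin m))
  have hidx : Fintype.card (Fin m) - 1 < (eigList G).length := by
    rw [hlen, Fintype.card_fin]; omega
  have hmem : lam G 1 ∈ eigList G := by
    rw [lam, List.getD_eq_getElem _ _ hidx]
    exact List.getElem_mem _
  rw [eigList, Multiset.mem_sort] at hmem
  obtain ⟨i0, -, hi0⟩ := Multiset.mem_map.mp hmem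
  have hi0' : hA.eigenvalues i0 = lam G 1 := hi0
  set μ := hA.eigenvalues i0 with hμdef
  set v : Fin m → ℝ := fun i => hA.eigenvectorBasis i0 i with hvdef
  have hv : ∀ i, (G.adjMatrix ℝ *ᵥ v) i = μ * v i := by
    intro i
    have := congrFun (hA.mulVec_eigenvectorBasis i0) i
    simpa [hvdef] using this
  have hvne : ∃ i, v i ≠ 0 := by
    by_contra h
    push_neg at h
    have h0 : hA.eigenvectorBasis i0 = 0 := by
      ext i
      exact h i
    have hn : ‖hA.eigenvectorBasis i0‖ = 1 := hA.eigenvectorBasis.orthonormal.1 i0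
    rw [h0, norm_zero] at hn
    norm_num at hn
  -- absolute-value vector
  set z : Fin m → ℝ := fun i => |v i| with hzdef
  have hz0 : ∀ i, 0 ≤ z i := fun i => abs_nonneg _
  have hsub : ∀ i, |μ| * z i ≤ ∑ j ∈ G.neighborFinset i, z j := by
    intro i
    have h1 : |μ| * z i = |(G.adjMatrix ℝ *ᵥ v) i| := by
      rw [hv i, abs_mul]
    rw [h1, SimpleGraph.adjMatrix_mulVec_apply]
    exact Finset.abs_sum_le_sum_abs _ _
  set P : ℝ := ∑ i, x i * z i with hPdef
  have hP : 0 < P := by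
    obtain ⟨i1, hi1⟩ := hvne
    refine Finset.sum_pos' (fun i _ => mul_nonneg (hx i).le (hz0 i)) ⟨i1, Finset.mem_univ _, ?_⟩
    exact mul_pos (hx i1) (abs_pos.mpr hi1)
  set M1 : ℝ := ∑ i, x i * (∑ j ∈ G.neighborFinset i, z j) with hM1def
  set M2 : ℝ := ∑ i, (∑ j ∈ G.neighborFinset i, x j) * z i with hM2def
  have hM12 : M1 = M2 := by
    have e1 : M1 = x ⬝ᵥ (G.adjMatrix ℝ *ᵥ z) := by
      rw [hM1def, dotProduct]
      exact Finset.sum_congr rfl fun i _ => by rw [SimpleGraph.adjMatrix_mulVec_apply]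
    have e2 : M2 = (x ᵥ* G.adjMatrix ℝ) ⬝ᵥ z := by
      rw [hM2def, dotProduct]
      exact Finset.sum_congr rfl fun i _ => by rw [SimpleGraph.adjMatrix_vecMul_apply]
    rw [e1, e2, dotProduct_mulVec]
  have h1 : |μ| * P ≤ M1 := by
    have e : |μ| * P = ∑ i, x i * (|μ| * z i) := by
      rw [hPdef, Finset.mul_sum]
      exact Finset.sum_congr rfl fun i _ => by ring
    rw [e, hM1def]
    exact Finset.sum_le_sum fun i _ => mul_le_mul_of_nonneg_left (hsub i) (hx i).le
  have h2 : M2 ≤ c * P := by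
    have e : c * P = ∑ i, (c * x i) * z i := by
      rw [hPdef, Finset.mul_sum]
      exact Finset.sum_congr rfl fun i _ => by ring
    rw [e, hM2def]
    exact Finset.sum_le_sum fun i _ => mul_le_mul_of_nonneg_right (hle i) (hz0 i)
  have habs : |μ| ≤ c := by
    have := (h1.trans_eq hM12).trans h2
    exact le_of_mul_le_mul_right (by linarith) hP
  have hμc : μ ≤ c := (le_abs_self μ).trans habs
  rw [← hi0']
  rcases lt_or_eq_of_le hμc with h | hμeq
  · exact h
  -- equality case: derive contradiction
  exfalso
  have hceq : |μ| = c := le_antisymm habs (hμeq ▸ le_abs_self μ)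
  have hM1eq : M1 = c * P := le_antisymm (hM12 ▸ h2) (by rw [← hceq]; exact h1)
  have hM2eq : M2 = c * P := hM12 ▸ hM1eq
  -- A z = c z
  have hAz : ∀ i, ∑ j ∈ G.neighborFinset i, z j = c * z i := by
    have hsum0 : ∑ i, x i * ((∑ j ∈ G.neighborFinset i, z j) - c * z i) = 0 := by
      have : ∑ i, x i * ((∑ j ∈ G.neighborFinset i, z j) - c * z i)
          = M1 - c * P := by
        rw [hM1def, hPdef, Finset.mul_sum, ← Finset.sum_sub_distrib]
        exact Finset.sum_congr rfl fun i _ => by ring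
      rw [this, hM1eq, sub_self]
    have hnn : ∀ i ∈ Finset.univ,
        0 ≤ x i * ((∑ j ∈ G.neighborFinset i, z j) - c * z i) := by
      intro i _
      apply mul_nonneg (hx i).le
      have := hsub i
      rw [hceq] at this
      linarith
    intro i
    have := (Finset.sum_eq_zero_iff_of_nonneg hnn).mp hsum0 i (Finset.mem_univ i)
    have hxne : x i ≠ 0 := (hx i).ne'
    have := mul_eq_zero.mp this
    rcases this with h | h
    · exact absurd h hxne
    · linarith
  -- z vanishes at the strict vertex
  have hz00 : z ⟨0, hm⟩ = 0 := by
    have hsum0 : ∑ i, z i * (c * x i - ∑ j ∈ G.neighborFinset i, x j) = 0 := by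
      have : ∑ i, z i * (c * x i - ∑ j ∈ G.neighborFinset i, x j)
          = c * P - M2 := by
        rw [hM2def, hPdef, Finset.mul_sum, ← Finset.sum_sub_distrib]
        exact Finset.sum_congr rfl fun i _ => by ring
      rw [this, hM2eq, sub_self]
    have hnn : ∀ i ∈ Finset.univ,
        0 ≤ z i * (c * x i - ∑ j ∈ G.neighborFinset i, x j) := by
      intro i _
      exact mul_nonneg (hz0 i) (by linarith [hle i])
    have := (Finset.sum_eq_zero_iff_of_nonneg hnn).mp hsum0 ⟨0, hm⟩ (Finset.mem_univ _)
    rcases mul_eq_zero.mp this with h | h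
    · exact h
    · linarith
  have hzz : ∀ i, z i = 0 := hker z hz0 hAz hz00
  obtain ⟨i1, hi1⟩ := hvne
  exact hi1 (abs_eq_zero.mp (hzz i1))


/-- Natural-number-indexed access to a vector on the caterpillar's vertices. -/
def Wnat (l r k : ℕ) (w : Fin (l + r + k + 1) → ℝ) (m : ℕ) : ℝ :=
  if h : m < l + r + k + 1 then w ⟨m, h⟩ else 0

lemma cat_nsum (l r k : ℕ) (w : Fin (l + r + k + 1) → ℝ) (i : Fin (l + r + k + 1)) :
    ∑ j ∈ (caterpillar l r k).neighborFinset i, w j =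
      (if 1 ≤ i.val ∧ i.val ≤ l + r then Wnat l r k w (i.val - 1) else 0)
    + (if i.val + 1 ≤ l + r then Wnat l r k w (i.val + 1) else 0)
    + (if i.val = l then
        ∑ j ∈ Finset.univ.filter (fun j : Fin (l + r + k + 1) => l + r < j.val), w j else 0)
    + (if l + r < i.val then Wnat l r k w l else 0) := by
  rw [SimpleGraph.neighborFinset_eq_filter, Finset.sum_filter]
  have key : ∀ j : Fin (l + r + k + 1), (if (caterpillar l r k).Adj i j then w j else 0) =
      (if (j.val + 1 = i.val ∧ i.val ≤ l + r) then w j else 0)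
    + (if (j.val = i.val + 1 ∧ j.val ≤ l + r) then w j else 0)
    + (if (i.val = l ∧ l + r < j.val) then w j else 0)
    + (if (l + r < i.val ∧ j.val = l) then w j else 0) := by
    intro j
    have hadj : (caterpillar l r k).Adj i j ↔
        ((j.val + 1 = i.val ∧ i.val ≤ l + r) ∨ (j.val = i.val + 1 ∧ j.val ≤ l + r) ∨
         (i.val = l ∧ l + r < j.val) ∨ (l + r < i.val ∧ j.val = l)) := by
      simp only [caterpillar, SimpleGraph.fromRel_adj, ne_eq, Fin.ext_iff]
      omega
    rw [if_congr hadj rfl rfl]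
    split_ifs <;> first | omega | ring1
  rw [Finset.sum_congr rfl (fun j _ => key j)]
  rw [Finset.sum_add_distrib, Finset.sum_add_distrib, Finset.sum_add_distrib]
  have eA : ∑ j : Fin (l + r + k + 1), (if (j.val + 1 = i.val ∧ i.val ≤ l + r) then w j else 0)
      = (if 1 ≤ i.val ∧ i.val ≤ l + r then Wnat l r k w (i.val - 1) else 0) := by
    by_cases h : 1 ≤ i.val ∧ i.val ≤ l + r
    · rw [if_pos h]
      have e : ∀ j : Fin (l + r + k + 1),
          (j.val + 1 = i.val ∧ i.val ≤ l + r) ↔ j = ⟨i.val - 1, by omega⟩ := by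
        intro j
        rw [Fin.ext_iff]
        simp only []
        omega
      rw [Finset.sum_congr rfl (fun j _ => if_congr (e j) rfl rfl)]
      simp only [Wnat]
      rw [dif_pos (by omega : i.val - 1 < l + r + k + 1)]
      simp [Finset.sum_ite_eq']
    · rw [if_neg h]
      apply Finset.sum_eq_zero
      intro j _
      rw [if_neg (by omega)]
  have eB : ∑ j : Fin (l + r + k + 1), (if (j.val = i.val + 1 ∧ j.val ≤ l + r) then w j else 0)
      = (if i.val + 1 ≤ l + r then Wnat l r k w (i.val + 1) else 0) := by
    by_cases h : i.val + 1 ≤ l + r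
    · rw [if_pos h]
      have e : ∀ j : Fin (l + r + k + 1),
          (j.val = i.val + 1 ∧ j.val ≤ l + r) ↔ j = ⟨i.val + 1, by omega⟩ := by
        intro j
        rw [Fin.ext_iff]
        simp only []
        omega
      rw [Finset.sum_congr rfl (fun j _ => if_congr (e j) rfl rfl)]
      simp only [Wnat]
      rw [dif_pos (by omega : i.val + 1 < l + r + k + 1)]
      simp [Finset.sum_ite_eq']
    · rw [if_neg h]
      apply Finset.sum_eq_zero
      intro j _
      rw [if_neg (by omega)]
  have eC : ∑ j : Fin (l + r + k + 1), (if (i.val = l ∧ l + r < j.val) then w j else 0)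
      = (if i.val = l then
          ∑ j ∈ Finset.univ.filter (fun j : Fin (l + r + k + 1) => l + r < j.val), w j else 0) := by
    by_cases h : i.val = l
    · rw [if_pos h, Finset.sum_filter]
      exact Finset.sum_congr rfl fun j _ => if_congr (by simp [h]) rfl rfl
    · rw [if_neg h]
      apply Finset.sum_eq_zero
      intro j _
      rw [if_neg (by omega)]
  have eD : ∑ j : Fin (l + r + k + 1), (if (l + r < i.val ∧ j.val = l) then w j else 0)
      = (if l + r < i.val then Wnat l r k w l else 0) := by
    by_cases h : l + r < i.val
    · rw [if_pos h]
      have e : ∀ j : Fin (l + r + k + 1),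
          (l + r < i.val ∧ j.val = l) ↔ j = ⟨l, by omega⟩ := by
        intro j
        rw [Fin.ext_iff]
        simp only []
        omega
      rw [Finset.sum_congr rfl (fun j _ => if_congr (e j) rfl rfl)]
      simp only [Wnat]
      rw [dif_pos (by omega : l < l + r + k + 1)]
      simp [Finset.sum_ite_eq']
    · rw [if_neg h]
      apply Finset.sum_eq_zero
      intro j _
      rw [if_neg (by omega)]
  rw [eA, eB, eC, eD]

set_option maxHeartbeats 1000000 in
/-- `λ₁(C(ℓ,r,k)) < √(√(k² + 4) + 2)` for all nonnegative integers `ℓ, r, k`. -/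
theorem stmt_7 (l r k : ℕ) :
    lam (caterpillar l r k) 1 < Real.sqrt (Real.sqrt ((k : ℝ) ^ 2 + 4) + 2) := by
  have hm : 0 < l + r + k + 1 := by omega
  set D := Real.sqrt ((k : ℝ) ^ 2 + 4) with hDdef
  have hD0 : (0:ℝ) ≤ (k:ℝ)^2 + 4 := by positivity
  have hD2 : D^2 = (k:ℝ)^2 + 4 := Real.sq_sqrt hD0
  have hDnn : 0 ≤ D := Real.sqrt_nonneg _
  have hD : 2 ≤ D := by nlinarith [sq_nonneg (k:ℝ)]
  set c := Real.sqrt (D + 2) with hcdef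
  have hc2 : c^2 = D + 2 := Real.sq_sqrt (by linarith)
  have hcnn : 0 ≤ c := Real.sqrt_nonneg _
  have hc : 2 ≤ c := by nlinarith
  have hc0 : (0:ℝ) < c := by linarith
  set q := Real.sqrt (D - 2) with hqdef
  have hq2 : q^2 = D - 2 := Real.sq_sqrt (by linarith)
  have hq0 : 0 ≤ q := Real.sqrt_nonneg _
  have hqc : q < c := by nlinarith
  set s := (c - q)/2 with hsdef
  set t := (c + q)/2 with htdef
  have hs : 0 < s := by rw [hsdef]; linarith
  have hstc : s + t = c := by rw [hsdef, htdef]; ring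
  have hst : s * t = 1 := by
    have e : s * t = (c^2 - q^2)/4 := by rw [hsdef, htdef]; ring
    rw [e, hc2, hq2]; ring
  have htc : t < c := by rw [htdef]; linarith
  have hkcq : (k:ℝ) = c * q := by
    have e : c * q = Real.sqrt ((D+2)*(D-2)) := by
      rw [hcdef, hqdef, ← Real.sqrt_mul (by linarith)]
    have e2 : (D+2)*(D-2) = (k:ℝ)^2 := by nlinarith
    rw [e, e2, Real.sqrt_sq (by positivity)]
  have hcenter : (k:ℝ) * (1/c) + 2*s = c := by
    have hkq : (k:ℝ) * (1/c) = q := by rw [hkcq]; field_simp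
    rw [hkq, hsdef]; ring
  have hts : ∀ e : ℕ, s^e = t * s^(e+1) := by
    intro e
    have h2 : t * s^(e+1) = (s*t) * s^e := by ring
    rw [h2, hst, one_mul]
  -- the test vector
  set X : ℕ → ℝ := fun m => if m ≤ l + r then s ^ ((l - m) + (m - l)) else 1/c with hXdef
  have hX1 : ∀ m, m ≤ l + r → X m = s ^ ((l - m) + (m - l)) := by
    intro m hm'
    rw [hXdef]
    exact if_pos hm'
  have hXleaf : ∀ m, l + r < m → X m = 1/c := by
    intro m hm'
    rw [hXdef]
    exact if_neg (by omega)
  have hXl : X l = 1 := by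
    rw [hX1 l (by omega), Nat.sub_self, pow_zero]
  have hXpos : ∀ m, 0 < X m := by
    intro m
    rw [hXdef]
    dsimp only
    split_ifs
    · exact pow_pos hs _
    · positivity
  set x : Fin (l + r + k + 1) → ℝ := fun i => X i.val with hxdef
  have hWX : ∀ m, m < l + r + k + 1 → Wnat l r k x m = X m := by
    intro m hm'
    rw [Wnat, dif_pos hm']
  have hleafsum : ∑ j ∈ Finset.univ.filter (fun j : Fin (l + r + k + 1) => l + r < j.val), x j
      = (k:ℝ) * (1/c) := by
    have hcongr : ∀ j ∈ Finset.univ.filter (fun j : Fin (l + r + k + 1) => l + r < j.val),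
        x j = 1/c := by
      intro j hj
      rw [Finset.mem_filter] at hj
      rw [hxdef]
      exact hXleaf _ hj.2
    have hmap : Finset.univ.filter (fun j : Fin (l + r + k + 1) => l + r < j.val)
        = Finset.map ⟨fun a : Fin k => (⟨l + r + 1 + a.val, by omega⟩ : Fin (l + r + k + 1)),
            by
              intro a b hab
              have h := congrArg Fin.val hab
              simp only [] at h
              exact Fin.ext (by omega)⟩ Finset.univ := by
      ext j
      simp only [Finset.mem_filter, Finset.mem_univ, true_and, Finset.mem_map,
        Function.Embedding.coeFn_mk]
      constructor
      · intro hj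
        refine ⟨⟨j.val - (l + r) - 1, by omega⟩, ?_⟩
        apply Fin.ext
        show l + r + 1 + (j.val - (l + r) - 1) = j.val
        omega
      · rintro ⟨a, rfl⟩
        show l + r < l + r + 1 + a.val
        omega
    have hcard : (Finset.univ.filter (fun j : Fin (l + r + k + 1) => l + r < j.val)).card = k := by
      rw [hmap, Finset.card_map, Finset.card_univ, Fintype.card_fin]
    rw [Finset.sum_congr rfl hcongr, Finset.sum_const, hcard, nsmul_eq_mul]
  -- apply the abstract bound
  refine lam_lt_of_subsolution hm (caterpillar l r k) c x (fun i => hXpos i.val) ?_ ?_ ?_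
  · -- subsolution inequality
    intro i
    rw [cat_nsum l r k x i, hleafsum]
    by_cases hp : i.val ≤ l + r
    · by_cases hl : i.val = l
      · -- center vertex
        have hxi : x i = 1 := by rw [hxdef]; dsimp only; rw [hl, hXl]
        rw [if_pos hl, if_neg (show ¬ l + r < i.val by omega), hxi, mul_one]
        have h1 : (if 1 ≤ i.val ∧ i.val ≤ l + r then Wnat l r k x (i.val - 1) else 0) ≤ s := by
          by_cases h : 1 ≤ i.val ∧ i.val ≤ l + r
          · rw [if_pos h, hWX _ (by omega), hX1 _ (by omega),
              (by omega : (l - (i.val - 1)) + ((i.val - 1) - l) = 1), pow_one]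
          · rw [if_neg h]; linarith
        have h2 : (if i.val + 1 ≤ l + r then Wnat l r k x (i.val + 1) else 0) ≤ s := by
          by_cases h : i.val + 1 ≤ l + r
          · rw [if_pos h, hWX _ (by omega), hX1 _ (by omega),
              (by omega : (l - (i.val + 1)) + ((i.val + 1) - l) = 1), pow_one]
          · rw [if_neg h]; linarith
        linarith
      · by_cases hjl : i.val < l
        · -- strictly left of the center
          have hxi : x i = s ^ (l - i.val) := by
            rw [hxdef]; dsimp only
            rw [hX1 _ hp, (by omega : (l - i.val) + (i.val - l) = l - i.val)]
          have hE : (0:ℝ) < s ^ (l - i.val) := pow_pos hs _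
          have h2 : Wnat l r k x (i.val + 1) = t * s ^ (l - i.val) := by
            rw [hWX _ (by omega), hX1 _ (by omega),
              (by omega : (l - (i.val + 1)) + ((i.val + 1) - l) = l - i.val - 1)]
            have h3 := hts (l - i.val - 1)
            rwa [(by omega : l - i.val - 1 + 1 = l - i.val)] at h3
          have h1 : (if 1 ≤ i.val ∧ i.val ≤ l + r then Wnat l r k x (i.val - 1) else 0)
              ≤ s * s ^ (l - i.val) := by
            by_cases h : 1 ≤ i.val ∧ i.val ≤ l + r
            · rw [if_pos h, hWX _ (by omega), hX1 _ (by omega),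
                (by omega : (l - (i.val - 1)) + ((i.val - 1) - l) = (l - i.val) + 1),
                pow_succ, mul_comm]
            · rw [if_neg h]; positivity
          rw [if_neg hl, if_neg (show ¬ l + r < i.val by omega),
            if_pos (show i.val + 1 ≤ l + r by omega), h2, hxi]
          have hcE : c * s ^ (l - i.val) = s * s ^ (l - i.val) + t * s ^ (l - i.val) := by
            rw [← hstc]; ring
          linarith
        · -- strictly right of the center
          have hir : l < i.val := by omega
          have hxi : x i = s ^ (i.val - l) := by
            rw [hxdef]; dsimp only
            rw [hX1 _ hp, (by omega : (l - i.val) + (i.val - l) = i.val - l)]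
          have hE : (0:ℝ) < s ^ (i.val - l) := pow_pos hs _
          have h1 : Wnat l r k x (i.val - 1) = t * s ^ (i.val - l) := by
            rw [hWX _ (by omega), hX1 _ (by omega),
              (by omega : (l - (i.val - 1)) + ((i.val - 1) - l) = i.val - l - 1)]
            have h3 := hts (i.val - l - 1)
            rwa [(by omega : i.val - l - 1 + 1 = i.val - l)] at h3
          have h2 : (if i.val + 1 ≤ l + r then Wnat l r k x (i.val + 1) else 0)
              ≤ s * s ^ (i.val - l) := by
            by_cases h : i.val + 1 ≤ l + r
            · rw [if_pos h, hWX _ (by omega), hX1 _ (by omega),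
                (by omega : (l - (i.val + 1)) + ((i.val + 1) - l) = (i.val - l) + 1),
                pow_succ, mul_comm]
            · rw [if_neg h]; positivity
          rw [if_neg hl, if_neg (show ¬ l + r < i.val by omega),
            if_pos (show 1 ≤ i.val ∧ i.val ≤ l + r by omega), h1, hxi]
          have hcE : c * s ^ (i.val - l) = s * s ^ (i.val - l) + t * s ^ (i.val - l) := by
            rw [← hstc]; ring
          linarith
    · -- leaf vertex
      have hxi : x i = 1/c := by
        rw [hxdef]; dsimp only
        exact hXleaf _ (by omega)
      rw [if_neg (show ¬(1 ≤ i.val ∧ i.val ≤ l + r) by omega),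
        if_neg (show ¬ i.val + 1 ≤ l + r by omega), if_neg (show ¬ i.val = l by omega),
        if_pos (show l + r < i.val by omega), hWX _ (by omega), hXl, hxi]
      rw [mul_one_div, div_self hc0.ne']
      norm_num
  · -- strict inequality at vertex 0
    rw [cat_nsum l r k x ⟨0, hm⟩, hleafsum]
    have hv0 : ((⟨0, hm⟩ : Fin (l + r + k + 1)) : ℕ) = 0 := rfl
    rw [hv0]
    by_cases hl0 : l = 0
    · have hxi : x ⟨0, hm⟩ = 1 := by
        rw [hxdef]; dsimp only
        rw [← hl0, hXl]
      rw [if_neg (show ¬(1 ≤ 0 ∧ 0 ≤ l + r) by omega), if_pos hl0.symm,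
        if_neg (show ¬ l + r < 0 by omega), hxi, mul_one]
      have h2 : (if 0 + 1 ≤ l + r then Wnat l r k x (0 + 1) else 0) ≤ s := by
        by_cases h : 0 + 1 ≤ l + r
        · rw [if_pos h, hWX _ (by omega), hX1 _ (by omega),
            (by omega : (l - (0 + 1)) + ((0 + 1) - l) = 1), pow_one]
        · rw [if_neg h]; linarith
      linarith
    · have hxi : x ⟨0, hm⟩ = s ^ l := by
        rw [hxdef]; dsimp only
        rw [hX1 _ (by omega), (by omega : (l - 0) + (0 - l) = l)]
      have hE : (0:ℝ) < s ^ l := pow_pos hs _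
      have h2 : Wnat l r k x (0 + 1) = t * s ^ l := by
        rw [hWX _ (by omega), hX1 _ (by omega),
          (by omega : (l - (0 + 1)) + ((0 + 1) - l) = l - 1)]
        have h3 := hts (l - 1)
        rwa [(by omega : l - 1 + 1 = l)] at h3
      rw [if_neg (show ¬(1 ≤ 0 ∧ 0 ≤ l + r) by omega), if_pos (show 0 + 1 ≤ l + r by omega),
        if_neg (show ¬(0 = l) by omega), if_neg (show ¬ l + r < 0 by omega), h2, hxi]
      have hlt : t * s ^ l < c * s ^ l := by nlinarith [mul_pos (sub_pos.mpr htc) hE]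
      linarith
  · -- kernel property
    intro z hz0 hAz hz00
    have hZnn : ∀ m, 0 ≤ Wnat l r k z m := by
      intro m
      rw [Wnat]
      split_ifs
      · exact hz0 _
      · exact le_refl 0
    have hLnn : 0 ≤ ∑ j ∈ Finset.univ.filter
        (fun j : Fin (l + r + k + 1) => l + r < j.val), z j :=
      Finset.sum_nonneg fun j _ => hz0 j
    have heqn : ∀ m : ℕ, (hm' : m < l + r + k + 1) →
        (if 1 ≤ m ∧ m ≤ l + r then Wnat l r k z (m - 1) else 0)
      + (if m + 1 ≤ l + r then Wnat l r k z (m + 1) else 0)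
      + (if m = l then ∑ j ∈ Finset.univ.filter
          (fun j : Fin (l + r + k + 1) => l + r < j.val), z j else 0)
      + (if l + r < m then Wnat l r k z l else 0) = c * Wnat l r k z m := by
      intro m hm'
      have h := hAz ⟨m, hm'⟩
      rw [cat_nsum l r k z ⟨m, hm'⟩] at h
      have hW : Wnat l r k z m = z ⟨m, hm'⟩ := by rw [Wnat, dif_pos hm']
      rw [hW]
      exact h
    have hW0 : Wnat l r k z 0 = 0 := by
      rw [Wnat, dif_pos (by omega : 0 < l + r + k + 1)]
      exact hz00
    -- propagate along the path
    have path0 : ∀ m : ℕ, m ≤ l + r → Wnat l r k z m = 0 := by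
      intro m
      induction m with
      | zero => intro _; exact hW0
      | succ mm ih =>
        intro hmm
        have hmm' : mm ≤ l + r := by omega
        have h := heqn mm (by omega)
        rw [ih hmm', mul_zero] at h
        have h1 : (0:ℝ) ≤ (if 1 ≤ mm ∧ mm ≤ l + r then Wnat l r k z (mm - 1) else 0) := by
          split_ifs
          · exact hZnn _
          · exact le_refl 0
        have h3 : (0:ℝ) ≤ (if mm = l then ∑ j ∈ Finset.univ.filter
            (fun j : Fin (l + r + k + 1) => l + r < j.val), z j else 0) := by
          split_ifs
          · exact hLnn
          · exact le_refl 0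
        have h4 : (0:ℝ) ≤ (if l + r < mm then Wnat l r k z l else 0) := by
          split_ifs
          · exact hZnn _
          · exact le_refl 0
        rw [if_pos (show mm + 1 ≤ l + r from hmm)] at h
        have h2 := hZnn (mm + 1)
        linarith
    -- leaves vanish
    have leaf0 : ∀ m : ℕ, (hm' : m < l + r + k + 1) → l + r < m → Wnat l r k z m = 0 := by
      intro m hm' hmr
      have h := heqn m hm'
      rw [if_neg (show ¬(1 ≤ m ∧ m ≤ l + r) by omega),
        if_neg (show ¬ m + 1 ≤ l + r by omega), if_neg (show ¬ m = l by omega),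
        if_pos hmr, path0 l (by omega)] at h
      have := hZnn m
      have hcz : c * Wnat l r k z m = 0 := by linarith
      rcases mul_eq_zero.mp hcz with h' | h'
      · exact absurd h' hc0.ne'
      · exact h'
    intro i
    have hW : Wnat l r k z i.val = z i := by
      rw [Wnat, dif_pos i.isLt]
    by_cases h : i.val ≤ l + r
    · rw [← hW]; exact path0 i.val h
    · rw [← hW]; exact leaf0 i.val i.isLt (by omega)


end
end

section
/- Let d ≥ 2 be even, n ≥ d + 1, and let T = C(d/2, d/2, n − d − 1) be the caterpillar obtained from a path v_0 … v_d by attaching n − d − 1 leaves at the middle vertex v_{d/2}. Then λ2(T) = λ1(P_{d/2}), the largest eigenvalue of the path on d/2 vertices. -/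
open Classical
attribute [local instance] Classical.propDecidable

noncomputable section

section Aux

open Matrix Finset

variable {N : ℕ}

lemma adjHerm (G : SimpleGraph (Fin N)) : ((G.adjMatrix ℝ)).IsHermitian := by
  rw [Matrix.IsHermitian]
  ext i j
  simp [Matrix.conjTranspose_apply, G.adj_comm j i]

lemma eigList_def (G : SimpleGraph (Fin N)) :
    eigList G = (Finset.univ.val.map (adjHerm G).eigenvalues).sort (· ≤ ·) := rfl

lemma length_eigList (G : SimpleGraph (Fin N)) : (eigList G).length = N := by
  rw [eigList_def]
  simp [Multiset.length_sort]

lemma sorted_eigList (G : SimpleGraph (Fin N)) : (eigList G).Pairwise (· ≤ ·) := by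
  rw [eigList_def]
  exact Multiset.pairwise_sort _ _

lemma mem_eigList {G : SimpleGraph (Fin N)} {x : ℝ} :
    x ∈ eigList G ↔ ∃ i, (adjHerm G).eigenvalues i = x := by
  rw [eigList_def, Multiset.mem_sort]
  simp [Multiset.mem_map, List.mem_ofFn, Set.mem_range]

lemma countP_eigList (G : SimpleGraph (Fin N)) (t : ℝ) :
    (eigList G).countP (fun x => decide (t < x)) =
      (Finset.univ.filter (fun i => t < (adjHerm G).eigenvalues i)).card := by
  have h1 := Multiset.coe_countP (fun x : ℝ => t < x) (eigList G)
  rw [← h1, eigList_def, Multiset.sort_eq, Multiset.countP_map]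
  rfl

lemma pack (G : SimpleGraph (Fin N)) :
    ∃ U : Matrix (Fin N) (Fin N) ℝ, Uᵀ * U = 1 ∧ U * Uᵀ = 1 ∧
      G.adjMatrix ℝ = U * Matrix.diagonal ((adjHerm G).eigenvalues) * Uᵀ := by
  set hA := adjHerm G
  refine ⟨(hA.eigenvectorUnitary : Matrix (Fin N) (Fin N) ℝ), ?_, ?_, ?_⟩
  · rw [← Matrix.conjTranspose_eq_transpose_of_trivial, ← Matrix.star_eq_conjTranspose]
    exact Unitary.coe_star_mul_self _
  · rw [← Matrix.conjTranspose_eq_transpose_of_trivial, ← Matrix.star_eq_conjTranspose]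
    exact Unitary.coe_mul_star_self _
  · have h := hA.spectral_theorem
    rw [Unitary.conjStarAlgAut_apply] at h
    rw [← Matrix.conjTranspose_eq_transpose_of_trivial, ← Matrix.star_eq_conjTranspose]
    exact h
attribute [local instance] Classical.propDecidable

lemma list_snd (l : List ℝ) (t : ℝ) (hs : l.Pairwise (· ≤ ·)) (h2 : 2 ≤ l.length)
    (hmem : t ∈ l) (hmax : t < l.getD (l.length - 1) 0)
    (hcnt : l.countP (fun x => decide (t < x)) ≤ 1) :
    l.getD (l.length - 2) 0 = t := by
  have h0 : l.length - 1 < l.length := by omega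
  have h1 : l.length - 2 < l.length := by omega
  rw [List.getD_eq_getElem l 0 h1]
  rw [List.getD_eq_getElem l 0 h0] at hmax
  have hpw := List.pairwise_iff_getElem.mp hs
  have hle : l[l.length - 2] ≤ t := by
    by_contra hgt
    push_neg at hgt
    have hdl : (l.drop (l.length - 2)).length = 2 := by
      rw [List.length_drop]; omega
    have hall : ∀ x ∈ l.drop (l.length - 2), t < x := by
      intro x hx
      obtain ⟨i, hi, rfl⟩ := List.mem_iff_getElem.mp hx
      rw [List.getElem_drop]
      rw [hdl] at hi
      refine lt_of_lt_of_le hgt ?_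
      rcases Nat.eq_or_lt_of_le (Nat.zero_le i) with h | h
      · simp [← h]
      · exact (hpw (l.length - 2) (l.length - 2 + i) h1 (by omega) (by omega))
    have hc2 : (l.drop (l.length - 2)).countP (fun x => decide (t < x)) = 2 := by
      rw [List.countP_eq_length.mpr (fun a ha => decide_eq_true (hall a ha)), hdl]
    have := (List.drop_sublist (l.length - 2) l).countP_le (p := fun x => decide (t < x))
    omega
  have hge : t ≤ l[l.length - 2] := by
    obtain ⟨k, hk, hkt⟩ := List.mem_iff_getElem.mp hmem
    have hkne : k ≠ l.length - 1 := by
      rintro rfl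
      rw [hkt] at hmax
      exact lt_irrefl _ hmax
    rcases Nat.lt_or_ge k (l.length - 2) with h | h
    · rw [← hkt]; exact (hpw k (l.length - 2) hk h1 h)
    · have hk2 : k = l.length - 2 := by omega
      subst hk2
      exact le_of_eq hkt.symm
  linarith
set_option linter.unusedSectionVars false
open Matrix Finset

section Core
variable {N : ℕ} {A U : Matrix (Fin N) (Fin N) ℝ} {d : Fin N → ℝ}
  (hU1 : Uᵀ * U = 1) (hU2 : U * Uᵀ = 1) (hS : A = U * Matrix.diagonal d * Uᵀ)

include hU1 hU2 hS

lemma mulVec_rep (y : Fin N → ℝ) : A *ᵥ (U *ᵥ y) = U *ᵥ (fun i => d i * y i) := by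
  rw [hS, Matrix.mulVec_mulVec, mul_assoc (U * Matrix.diagonal d), hU1, mul_one,
    ← Matrix.mulVec_mulVec]
  have he : Matrix.diagonal d *ᵥ y = fun i => d i * y i := by
    funext i
    rw [Matrix.mulVec_diagonal]
  rw [he]

lemma dot_UU (a b : Fin N → ℝ) : (U *ᵥ a) ⬝ᵥ (U *ᵥ b) = a ⬝ᵥ b := by
  rw [Matrix.dotProduct_mulVec, Matrix.vecMul_mulVec, hU1, Matrix.vecMul_one]

lemma quad_UU (y : Fin N → ℝ) :
    (U *ᵥ y) ⬝ᵥ (A *ᵥ (U *ᵥ y)) = ∑ i, d i * (y i)^2 := by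
  rw [mulVec_rep hU1 hU2 hS, dot_UU hU1 hU2 hS]
  simp [dotProduct, pow_two, mul_comm, mul_assoc, mul_left_comm]

lemma exists_rep (x : Fin N → ℝ) : ∃ y, x = U *ᵥ y :=
  ⟨Uᵀ *ᵥ x, by rw [Matrix.mulVec_mulVec, hU2, Matrix.one_mulVec]⟩

/-- Rayleigh upper bound. -/
lemma quad_le (t : ℝ) (h : ∀ i, d i ≤ t) (x : Fin N → ℝ) :
    x ⬝ᵥ (A *ᵥ x) ≤ t * (x ⬝ᵥ x) := by
  obtain ⟨y, rfl⟩ := exists_rep hU1 hU2 hS x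
  rw [quad_UU hU1 hU2 hS, dot_UU hU1 hU2 hS]
  have he : t * (y ⬝ᵥ y) = ∑ i, t * (y i)^2 := by
    simp [dotProduct, Finset.mul_sum, pow_two]
  rw [he]
  exact Finset.sum_le_sum fun i _ => mul_le_mul_of_nonneg_right (h i) (sq_nonneg _)

lemma exists_eig_gt (t : ℝ) (x : Fin N → ℝ) (h : t * (x ⬝ᵥ x) < x ⬝ᵥ (A *ᵥ x)) :
    ∃ i, t < d i := by
  by_contra hc
  push_neg at hc
  exact absurd (quad_le hU1 hU2 hS t hc x) (not_le.mpr h)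

lemma U_inj : Function.Injective (fun z : Fin N → ℝ => U *ᵥ z) := by
  intro a b hab
  simp only at hab
  have h2 : Uᵀ *ᵥ (U *ᵥ a) = Uᵀ *ᵥ (U *ᵥ b) := by rw [hab]
  simpa [Matrix.mulVec_mulVec, hU1, Matrix.one_mulVec] using h2

lemma eig_mem (t : ℝ) (v : Fin N → ℝ) (hv : v ≠ 0) (h : A *ᵥ v = t • v) :
    ∃ i, d i = t := by
  obtain ⟨y, rfl⟩ := exists_rep hU1 hU2 hS v
  have hy : y ≠ 0 := by
    rintro rfl; simp at hv
  rw [mulVec_rep hU1 hU2 hS, ← Matrix.mulVec_smul] at h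
  have h2 : (fun i => d i * y i) = t • y := U_inj hU1 hU2 hS h
  obtain ⟨i, hi⟩ := Function.ne_iff.mp hy
  have h3 := congrFun h2 i
  simp only [Pi.smul_apply, smul_eq_mul] at h3
  exact ⟨i, mul_right_cancel₀ hi h3⟩

lemma exists_eigvec (i : Fin N) : ∃ v : Fin N → ℝ, v ≠ 0 ∧ A *ᵥ v = d i • v := by
  refine ⟨U *ᵥ Pi.single i 1, ?_, ?_⟩
  · intro h0
    have h1 : U *ᵥ Pi.single i 1 = U *ᵥ (0 : Fin N → ℝ) := by simpa using h0
    have h2 := U_inj hU1 hU2 hS h1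
    have := congrFun h2 i
    simp at this
  · rw [mulVec_rep hU1 hU2 hS, ← Matrix.mulVec_smul]
    have he : (fun j => d j * (Pi.single i 1 : Fin N → ℝ) j) = d i • (Pi.single i 1 : Fin N → ℝ) := by
      funext j
      by_cases hj : j = i <;> simp [hj, Pi.single_apply]
    rw [he]

/-- At most one eigenvalue above `t`, given a hyperplane bound. -/
lemma at_most_one (t : ℝ) (c : Fin N)
    (hH : ∀ x : Fin N → ℝ, x c = 0 → x ⬝ᵥ (A *ᵥ x) ≤ t * (x ⬝ᵥ x))
    (i j : Fin N) (hij : i ≠ j) (hi : t < d i) (hj : t < d j) : False := by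
  have hsum : ∀ w : Fin N → ℝ, (∀ z, z ≠ i → z ≠ j → w z = 0) → ∑ z, w z = w i + w j := by
    intro w hw
    rw [← Finset.sum_subset (Finset.subset_univ {i, j})
      (by intro z _ hz; simp only [Finset.mem_insert, Finset.mem_singleton] at hz
          push_neg at hz; exact hw z hz.1 hz.2)]
    exact Finset.sum_pair hij
  set a : ℝ := U c i with ha
  set b : ℝ := U c j with hb
  by_cases hab : a = 0 ∧ b = 0
  · -- y = single i 1
    set y : Fin N → ℝ := Pi.single i 1 with hy
    have hc : (U *ᵥ y) c = 0 := by
      simp [hy, Matrix.mulVec_single, ← ha, hab.1]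
    have hquad := hH (U *ᵥ y) hc
    rw [quad_UU hU1 hU2 hS, dot_UU hU1 hU2 hS] at hquad
    have h1 : ∑ z, d z * (y z)^2 = d i := by
      rw [Finset.sum_eq_single i]
      · simp [hy]
      · intro z _ hz; simp [hy, Pi.single_apply, hz]
      · simp
    have h2 : (y ⬝ᵥ y) = 1 := by
      simp [dotProduct, hy, Pi.single_apply]
    rw [h1, h2, mul_one] at hquad
    exact absurd hquad (not_le.mpr hi)
  · have hab' : a ≠ 0 ∨ b ≠ 0 := by tauto
    set y : Fin N → ℝ := fun z => if z = i then b else if z = j then -a else 0 with hy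
    have hyi : y i = b := by simp [hy]
    have hyj : y j = -a := by simp [hy, Ne.symm hij]
    have hyz : ∀ z, z ≠ i → z ≠ j → y z = 0 := by
      intro z h1 h2; simp [hy, h1, h2]
    have hc : (U *ᵥ y) c = 0 := by
      show (U c) ⬝ᵥ y = 0
      rw [dotProduct, hsum _ (fun z h1 h2 => by rw [hyz z h1 h2, mul_zero])]
      rw [hyi, hyj, ← ha, ← hb]; ring
    have hquad := hH (U *ᵥ y) hc
    rw [quad_UU hU1 hU2 hS, dot_UU hU1 hU2 hS] at hquad
    rw [hsum _ (fun z h1 h2 => by rw [hyz z h1 h2]; ring)] at hquad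
    rw [show y ⬝ᵥ y = ∑ z, y z * y z from rfl,
      hsum _ (fun z h1 h2 => by rw [hyz z h1 h2]; ring)] at hquad
    rw [hyi, hyj] at hquad
    rcases hab' with h0 | h0
    · nlinarith [sq_nonneg a, sq_nonneg b, mul_le_mul_of_nonneg_right (le_of_lt hi) (sq_nonneg b),
        mul_lt_mul_of_pos_right hj (by positivity : (0:ℝ) < a^2)]
    · nlinarith [sq_nonneg a, sq_nonneg b, mul_le_mul_of_nonneg_right (le_of_lt hj) (sq_nonneg a),
        mul_lt_mul_of_pos_right hi (by positivity : (0:ℝ) < b^2)]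
end Core

lemma sorted_le_last {l : List ℝ} (hs : l.Pairwise (· ≤ ·)) {x : ℝ} (hx : x ∈ l) :
    x ≤ l.getD (l.length - 1) 0 := by
  have hl : 0 < l.length := List.length_pos_iff.mpr (List.ne_nil_of_mem hx)
  rw [List.getD_eq_getElem l 0 (by omega)]
  obtain ⟨k, hk, rfl⟩ := List.mem_iff_getElem.mp hx
  rcases Nat.lt_or_ge k (l.length - 1) with h | h
  · exact List.pairwise_iff_getElem.mp hs k (l.length - 1) hk (by omega) h
  · have : k = l.length - 1 := by omega
    subst this
    exact le_refl _

lemma lam1_ub (G : SimpleGraph (Fin N)) (x : Fin N → ℝ) :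
    x ⬝ᵥ (G.adjMatrix ℝ *ᵥ x) ≤ lam G 1 * (x ⬝ᵥ x) := by
  obtain ⟨U, hU1, hU2, hS⟩ := pack G
  refine quad_le hU1 hU2 hS _ (fun i => ?_) x
  have hmem : (adjHerm G).eigenvalues i ∈ eigList G := mem_eigList.mpr ⟨i, rfl⟩
  have h2 := sorted_le_last (sorted_eigList G) hmem
  rw [length_eigList] at h2
  rw [lam, Fintype.card_fin]
  exact h2

lemma lam1_eigvec (G : SimpleGraph (Fin N)) (hN : 1 ≤ N) :
    ∃ v : Fin N → ℝ, v ≠ 0 ∧ G.adjMatrix ℝ *ᵥ v = lam G 1 • v := by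
  obtain ⟨U, hU1, hU2, hS⟩ := pack G
  have hmem : lam G 1 ∈ eigList G := by
    rw [lam, Fintype.card_fin, List.getD_eq_getElem _ 0 (by rw [length_eigList]; omega)]
    exact List.getElem_mem _
  obtain ⟨i, hi⟩ := mem_eigList.mp hmem
  obtain ⟨v, hv, hev⟩ := exists_eigvec hU1 hU2 hS i
  exact ⟨v, hv, by rwa [hi] at hev⟩

lemma lam2_eq (G : SimpleGraph (Fin N)) (t : ℝ) (c : Fin N) (hN : 2 ≤ N)
    (hmem : ∃ v : Fin N → ℝ, v ≠ 0 ∧ G.adjMatrix ℝ *ᵥ v = t • v)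
    (hgt : ∃ x : Fin N → ℝ, t * (x ⬝ᵥ x) < x ⬝ᵥ (G.adjMatrix ℝ *ᵥ x))
    (hH : ∀ x : Fin N → ℝ, x c = 0 → x ⬝ᵥ (G.adjMatrix ℝ *ᵥ x) ≤ t * (x ⬝ᵥ x)) :
    lam G 2 = t := by
  obtain ⟨U, hU1, hU2, hS⟩ := pack G
  have hlen : (eigList G).length = N := length_eigList G
  -- t is an eigenvalue
  obtain ⟨v, hv, hev⟩ := hmem
  have htmem : t ∈ eigList G := mem_eigList.mpr (eig_mem hU1 hU2 hS t v hv hev)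
  -- some eigenvalue exceeds t
  obtain ⟨x, hx⟩ := hgt
  obtain ⟨i, hi⟩ := exists_eig_gt hU1 hU2 hS t x hx
  -- max exceeds t
  have hmax : t < (eigList G).getD ((eigList G).length - 1) 0 :=
    lt_of_lt_of_le hi (sorted_le_last (sorted_eigList G) (mem_eigList.mpr ⟨i, rfl⟩))
  -- at most one exceeds t
  have hcnt : (eigList G).countP (fun x => decide (t < x)) ≤ 1 := by
    rw [countP_eigList]
    rw [Finset.card_le_one]
    intro a ha b hb
    by_contra hab
    simp only [Finset.mem_filter] at ha hb
    exact at_most_one hU1 hU2 hS t c hH a b hab ha.2 hb.2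
  have hfin := list_snd (eigList G) t (sorted_eigList G) (by omega) htmem hmax hcnt
  rw [hlen] at hfin
  rw [lam, Fintype.card_fin]
  exact hfin

lemma path_adj {m : ℕ} (u v : Fin m) :
    (pathG m).Adj u v ↔ (u.val + 1 = v.val ∨ v.val + 1 = u.val) := by
  rw [pathG, SimpleGraph.fromRel_adj, Ne, Fin.ext_iff]
  omega

lemma cat_adj {l k : ℕ} (u v : Fin (l + l + k + 1)) :
    (caterpillar l l k).Adj u v ↔
      (u.val + 1 = v.val ∧ v.val ≤ l + l) ∨ (v.val + 1 = u.val ∧ u.val ≤ l + l) ∨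
      (u.val = l ∧ l + l < v.val) ∨ (v.val = l ∧ l + l < u.val) := by
  rw [caterpillar, SimpleGraph.fromRel_adj, Ne, Fin.ext_iff]
  omega

/-- extension of a `Fin`-vector by zero -/
def ext0 {m : ℕ} (y : Fin m → ℝ) : ℕ → ℝ := fun j => if h : j < m then y ⟨j, h⟩ else 0

lemma ext0_lt {m : ℕ} (y : Fin m → ℝ) {j : ℕ} (h : j < m) : ext0 y j = y ⟨j, h⟩ := dif_pos h

lemma ext0_ge {m : ℕ} (y : Fin m → ℝ) {j : ℕ} (h : ¬ j < m) : ext0 y j = 0 := dif_neg h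

lemma mulVec_apply' {m : ℕ} (M : Matrix (Fin m) (Fin m) ℝ) (x : Fin m → ℝ) (v : Fin m) :
    (M *ᵥ x) v = ∑ u, M v u * x u := rfl

lemma sum_vanish {m : ℕ} (w : Fin m → ℝ) (a b : ℕ) (hab : a ≠ b)
    (h : ∀ z : Fin m, w z ≠ 0 → z.val = a ∨ z.val = b) :
    ∑ z, w z = ext0 w a + ext0 w b := by
  have hsub : ∑ z, w z = ∑ z ∈ Finset.univ.filter (fun z : Fin m => z.val = a ∨ z.val = b), w z := by
    refine (Finset.sum_subset (Finset.filter_subset _ _) ?_).symm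
    intro z _ hz
    simp only [Finset.mem_filter, Finset.mem_univ, true_and] at hz
    by_contra hw
    exact hz (h z hw)
  rw [hsub]
  by_cases ha : a < m <;> by_cases hb : b < m
  · have hset : Finset.univ.filter (fun z : Fin m => z.val = a ∨ z.val = b) =
        {(⟨a, ha⟩ : Fin m), ⟨b, hb⟩} := by
      ext z
      simp [Fin.ext_iff]
    rw [hset, Finset.sum_pair (by simp [Fin.ext_iff]; omega), ext0_lt w ha, ext0_lt w hb]
  · have hset : Finset.univ.filter (fun z : Fin m => z.val = a ∨ z.val = b) =
        {(⟨a, ha⟩ : Fin m)} := by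
      ext z
      simp [Fin.ext_iff]
      omega
    rw [hset, Finset.sum_singleton, ext0_lt w ha, ext0_ge w hb, add_zero]
  · have hset : Finset.univ.filter (fun z : Fin m => z.val = a ∨ z.val = b) =
        {(⟨b, hb⟩ : Fin m)} := by
      ext z
      simp [Fin.ext_iff]
      omega
    rw [hset, Finset.sum_singleton, ext0_lt w hb, ext0_ge w ha, zero_add]
  · have hset : Finset.univ.filter (fun z : Fin m => z.val = a ∨ z.val = b) =
        (∅ : Finset (Fin m)) := by
      ext z
      simp [Fin.ext_iff]
      omega
    rw [hset, Finset.sum_empty, ext0_ge w ha, ext0_ge w hb, add_zero]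

lemma pathRow {m : ℕ} (y : Fin m → ℝ) (i : Fin m) :
    (SimpleGraph.adjMatrix ℝ (pathG m) *ᵥ y) i =
      ext0 y (i.val + 1) + (if i.val = 0 then 0 else ext0 y (i.val - 1)) := by
  have hi := i.isLt
  rw [mulVec_apply']
  have hup : ext0 (fun u => SimpleGraph.adjMatrix ℝ (pathG m) i u * y u) (i.val + 1)
      = ext0 y (i.val + 1) := by
    by_cases h1 : i.val + 1 < m
    · rw [ext0_lt _ h1, ext0_lt y h1]
      have hadj : (pathG m).Adj i ⟨i.val + 1, h1⟩ := by rw [path_adj]; simp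
      simp [SimpleGraph.adjMatrix_apply, hadj]
    · rw [ext0_ge _ h1, ext0_ge y h1]
  by_cases h0 : i.val = 0
  · have hvan : ∀ z : Fin m, (SimpleGraph.adjMatrix ℝ (pathG m) i z * y z) ≠ 0 →
        z.val = i.val + 1 ∨ z.val = m + 1 := by
      intro z hz
      have hadj : (pathG m).Adj i z := by
        by_contra hc
        simp [SimpleGraph.adjMatrix_apply, hc] at hz
      rw [path_adj] at hadj
      omega
    rw [sum_vanish _ (i.val + 1) (m + 1) (by omega) hvan,
      ext0_ge _ (by omega : ¬ m + 1 < m), add_zero, if_pos h0, add_zero, hup]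
  · have hvan : ∀ z : Fin m, (SimpleGraph.adjMatrix ℝ (pathG m) i z * y z) ≠ 0 →
        z.val = i.val + 1 ∨ z.val = i.val - 1 := by
      intro z hz
      have hadj : (pathG m).Adj i z := by
        by_contra hc
        simp [SimpleGraph.adjMatrix_apply, hc] at hz
      rw [path_adj] at hadj
      omega
    rw [sum_vanish _ (i.val + 1) (i.val - 1) (by omega) hvan, if_neg h0, hup]
    congr 1
    have h1 : i.val - 1 < m := by omega
    rw [ext0_lt _ h1, ext0_lt y h1]
    have hadj : (pathG m).Adj i ⟨i.val - 1, h1⟩ := by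
      rw [path_adj]; right; simp; omega
    simp [SimpleGraph.adjMatrix_apply, hadj]

section CatRows
variable {l k : ℕ}

lemma adj_of_ne_zero {m : ℕ} {G : SimpleGraph (Fin m)} {x : Fin m → ℝ} {v z : Fin m}
    (hz : SimpleGraph.adjMatrix ℝ G v z * x z ≠ 0) : G.Adj v z := by
  by_contra hc
  simp [SimpleGraph.adjMatrix_apply, hc] at hz

lemma entry_adj {m : ℕ} {G : SimpleGraph (Fin m)} {x : Fin m → ℝ} {v z : Fin m}
    (h : G.Adj v z) : SimpleGraph.adjMatrix ℝ G v z * x z = x z := by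
  simp [SimpleGraph.adjMatrix_apply, h]

lemma entry_nadj {m : ℕ} {G : SimpleGraph (Fin m)} {x : Fin m → ℝ} {v z : Fin m}
    (h : ¬ G.Adj v z) : SimpleGraph.adjMatrix ℝ G v z * x z = 0 := by
  simp [SimpleGraph.adjMatrix_apply, h]


lemma cat_adj_nat {l k : ℕ} (v : Fin (l + l + k + 1)) (j : ℕ) (hj : j < l + l + k + 1)
    (h : (v.val + 1 = j ∧ j ≤ l + l) ∨ (j + 1 = v.val ∧ v.val ≤ l + l) ∨
      (v.val = l ∧ l + l < j) ∨ (j = l ∧ l + l < v.val)) :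
    (caterpillar l l k).Adj v ⟨j, hj⟩ := by
  rw [cat_adj]
  have e : (⟨j, hj⟩ : Fin (l + l + k + 1)).val = j := rfl
  omega

lemma cat_nadj_nat {l k : ℕ} (v : Fin (l + l + k + 1)) (j : ℕ) (hj : j < l + l + k + 1)
    (h : ¬ ((v.val + 1 = j ∧ j ≤ l + l) ∨ (j + 1 = v.val ∧ v.val ≤ l + l) ∨
      (v.val = l ∧ l + l < j) ∨ (j = l ∧ l + l < v.val))) :
    ¬ (caterpillar l l k).Adj v ⟨j, hj⟩ := by
  rw [cat_adj]
  have e : (⟨j, hj⟩ : Fin (l + l + k + 1)).val = j := rfl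
  omega

lemma catRow_left (x : Fin (l + l + k + 1) → ℝ) (v : Fin (l + l + k + 1)) (hv : v.val < l) :
    (SimpleGraph.adjMatrix ℝ (caterpillar l l k) *ᵥ x) v =
      ext0 x (v.val + 1) + (if v.val = 0 then 0 else ext0 x (v.val - 1)) := by
  have hN := v.isLt
  rw [mulVec_apply']
  have hup : ext0 (fun u => SimpleGraph.adjMatrix ℝ (caterpillar l l k) v u * x u) (v.val + 1)
      = ext0 x (v.val + 1) := by
    have h1 : v.val + 1 < l + l + k + 1 := by omega
    rw [ext0_lt _ h1, ext0_lt x h1]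
    exact entry_adj (cat_adj_nat v _ h1 (by omega))
  by_cases h0 : v.val = 0
  · have hvan : ∀ z : Fin (l + l + k + 1),
        (SimpleGraph.adjMatrix ℝ (caterpillar l l k) v z * x z) ≠ 0 →
        z.val = v.val + 1 ∨ z.val = l + l + k + 1 := by
      intro z hz
      have hadj := adj_of_ne_zero hz
      rw [cat_adj] at hadj
      omega
    rw [sum_vanish _ (v.val + 1) (l + l + k + 1) (by omega) hvan, ext0_ge (j := l + l + k + 1) _ (by omega), add_zero, if_pos h0,
      add_zero, hup]
  · have hvan : ∀ z : Fin (l + l + k + 1),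
        (SimpleGraph.adjMatrix ℝ (caterpillar l l k) v z * x z) ≠ 0 →
        z.val = v.val + 1 ∨ z.val = v.val - 1 := by
      intro z hz
      have hadj := adj_of_ne_zero hz
      rw [cat_adj] at hadj
      omega
    rw [sum_vanish _ (v.val + 1) (v.val - 1) (by omega) hvan, if_neg h0, hup]
    congr 1
    have h1 : v.val - 1 < l + l + k + 1 := by omega
    rw [ext0_lt _ h1, ext0_lt x h1]
    exact entry_adj (cat_adj_nat v _ h1 (by omega))

lemma catRow_right (x : Fin (l + l + k + 1) → ℝ) (v : Fin (l + l + k + 1))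
    (hv1 : l < v.val) (hv2 : v.val ≤ l + l) :
    (SimpleGraph.adjMatrix ℝ (caterpillar l l k) *ᵥ x) v =
      (if v.val = l + l then 0 else ext0 x (v.val + 1)) + ext0 x (v.val - 1) := by
  have hN := v.isLt
  rw [mulVec_apply']
  have hvan : ∀ z : Fin (l + l + k + 1),
      (SimpleGraph.adjMatrix ℝ (caterpillar l l k) v z * x z) ≠ 0 →
      z.val = v.val + 1 ∨ z.val = v.val - 1 := by
    intro z hz
    have hadj := adj_of_ne_zero hz
    rw [cat_adj] at hadj
    omega
  rw [sum_vanish _ (v.val + 1) (v.val - 1) (by omega) hvan]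
  congr 1
  · by_cases h2 : v.val = l + l
    · rw [if_pos h2]
      by_cases h1 : v.val + 1 < l + l + k + 1
      · rw [ext0_lt _ h1]
        exact entry_nadj (cat_nadj_nat v _ h1 (by omega))
      · exact ext0_ge _ h1
    · rw [if_neg h2]
      have h1 : v.val + 1 < l + l + k + 1 := by omega
      rw [ext0_lt _ h1, ext0_lt x h1]
      exact entry_adj (cat_adj_nat v _ h1 (by omega))
  · have h1 : v.val - 1 < l + l + k + 1 := by omega
    rw [ext0_lt _ h1, ext0_lt x h1]
    exact entry_adj (cat_adj_nat v _ h1 (by omega))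

lemma catRow_leaf (hl : 1 ≤ l) (x : Fin (l + l + k + 1) → ℝ) (v : Fin (l + l + k + 1))
    (hv : l + l < v.val) :
    (SimpleGraph.adjMatrix ℝ (caterpillar l l k) *ᵥ x) v = ext0 x l := by
  have hN := v.isLt
  rw [mulVec_apply']
  have hvan : ∀ z : Fin (l + l + k + 1),
      (SimpleGraph.adjMatrix ℝ (caterpillar l l k) v z * x z) ≠ 0 →
      z.val = l ∨ z.val = l + l + k + 1 := by
    intro z hz
    have hadj := adj_of_ne_zero hz
    rw [cat_adj] at hadj
    omega
  rw [sum_vanish _ l (l + l + k + 1) (by omega) hvan, ext0_ge (j := l + l + k + 1) _ (by omega), add_zero]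
  have h1 : l < l + l + k + 1 := by omega
  rw [ext0_lt _ h1, ext0_lt x h1]
  exact entry_adj (cat_adj_nat v _ h1 (by omega))

lemma catRow_center (hl : 1 ≤ l) (x : Fin (l + l + k + 1) → ℝ) (v : Fin (l + l + k + 1))
    (hv : v.val = l) (hx : ∀ z : Fin (l + l + k + 1), l + l < z.val → x z = 0) :
    (SimpleGraph.adjMatrix ℝ (caterpillar l l k) *ᵥ x) v = ext0 x (l - 1) + ext0 x (l + 1) := by
  have hN := v.isLt
  rw [mulVec_apply']
  have hvan : ∀ z : Fin (l + l + k + 1),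
      (SimpleGraph.adjMatrix ℝ (caterpillar l l k) v z * x z) ≠ 0 →
      z.val = l - 1 ∨ z.val = l + 1 := by
    intro z hz
    have hadj := adj_of_ne_zero hz
    rw [cat_adj] at hadj
    have hnl : ¬ (l + l < z.val) := by
      intro hc
      exact hz (by rw [hx z hc, mul_zero])
    omega
  rw [sum_vanish _ (l - 1) (l + 1) (by omega) hvan]
  congr 1
  · have h1 : l - 1 < l + l + k + 1 := by omega
    rw [ext0_lt _ h1, ext0_lt x h1]
    exact entry_adj (cat_adj_nat v _ h1 (by omega))
  · have h1 : l + 1 < l + l + k + 1 := by omega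
    rw [ext0_lt _ h1, ext0_lt x h1]
    exact entry_adj (cat_adj_nat v _ h1 (by omega))

end CatRows


section PartB
open Matrix Finset

lemma pathEq {m : ℕ} {f : Fin m → ℝ} {t : ℝ}
    (hf : SimpleGraph.adjMatrix ℝ (pathG m) *ᵥ f = t • f) (i : Fin m) :
    ext0 f (i.val + 1) + (if i.val = 0 then 0 else ext0 f (i.val - 1)) = t * f i := by
  rw [← pathRow]
  rw [hf]
  rfl

lemma quad_double {m : ℕ} (M : Matrix (Fin m) (Fin m) ℝ) (x y : Fin m → ℝ) :
    x ⬝ᵥ (M *ᵥ y) = ∑ i, ∑ j, x i * (M i j * y j) := by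
  simp [dotProduct, Matrix.mulVec, Finset.mul_sum]

lemma adjM_nonneg {m : ℕ} (G : SimpleGraph (Fin m)) (i j : Fin m) :
    0 ≤ SimpleGraph.adjMatrix ℝ G i j := by
  rw [SimpleGraph.adjMatrix_apply]
  split <;> norm_num

lemma adjM_symm {m : ℕ} (G : SimpleGraph (Fin m)) (i j : Fin m) :
    SimpleGraph.adjMatrix ℝ G i j = SimpleGraph.adjMatrix ℝ G j i := by
  simp [SimpleGraph.adjMatrix_apply, G.adj_comm]

lemma quad_abs_ge {m : ℕ} (G : SimpleGraph (Fin m)) (g : Fin m → ℝ) :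
    g ⬝ᵥ (SimpleGraph.adjMatrix ℝ G *ᵥ g) ≤
      (fun v => |g v|) ⬝ᵥ (SimpleGraph.adjMatrix ℝ G *ᵥ (fun v => |g v|)) := by
  rw [quad_double, quad_double]
  refine Finset.sum_le_sum fun i _ => Finset.sum_le_sum fun j _ => ?_
  have hA := adjM_nonneg G i j
  calc g i * (SimpleGraph.adjMatrix ℝ G i j * g j)
      = SimpleGraph.adjMatrix ℝ G i j * (g i * g j) := by ring
    _ ≤ SimpleGraph.adjMatrix ℝ G i j * |g i * g j| :=
        mul_le_mul_of_nonneg_left (le_abs_self _) hA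
    _ = |g i| * (SimpleGraph.adjMatrix ℝ G i j * |g j|) := by rw [abs_mul]; ring

lemma lam_path_nonneg {m : ℕ} (hm : 1 ≤ m) : 0 ≤ lam (pathG m) 1 := by
  set x0 : Fin m → ℝ := (Pi.single (⟨0, hm⟩ : Fin m) (1:ℝ) : Fin m → ℝ) with hx0
  have h := lam1_ub (pathG m) x0
  rw [quad_double] at h
  have h1 : ∑ i, ∑ j, x0 i * (SimpleGraph.adjMatrix ℝ (pathG m) i j * x0 j) = 0 := by
    refine Finset.sum_eq_zero fun i _ => Finset.sum_eq_zero fun j _ => ?_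
    by_cases hi : i = ⟨0, hm⟩
    · by_cases hj : j = ⟨0, hm⟩
      · subst hi; subst hj
        simp [hx0, SimpleGraph.adjMatrix_apply]
      · rw [hx0]
        rw [show (Pi.single (⟨0, hm⟩ : Fin m) (1:ℝ) : Fin m → ℝ) j = 0 by
          rw [Pi.single_apply, if_neg hj], mul_zero, mul_zero]
    · rw [hx0]
      rw [show (Pi.single (⟨0, hm⟩ : Fin m) (1:ℝ) : Fin m → ℝ) i = 0 by
        rw [Pi.single_apply, if_neg hi], zero_mul]
  rw [h1] at h
  have h2 : x0 ⬝ᵥ x0 = 1 := by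
    simp [hx0, dotProduct, Pi.single_apply]
  rw [h2, mul_one] at h
  exact h

section Split
variable {l k : ℕ}

lemma sum_left (hl : 1 ≤ l) (h : Fin (l + l + k + 1) → ℝ) :
    ∑ v ∈ Finset.univ.filter (fun v : Fin (l + l + k + 1) => v.val < l), h v
      = ∑ i : Fin l, h ⟨i.val, by omega⟩ := by
  have himg : Finset.univ.filter (fun v : Fin (l + l + k + 1) => v.val < l)
      = Finset.image (fun i : Fin l => (⟨i.val, by omega⟩ : Fin (l + l + k + 1))) Finset.univ := by
    ext v
    simp only [Finset.mem_filter, Finset.mem_univ, true_and, Finset.mem_image]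
    constructor
    · intro hv
      exact ⟨⟨v.val, hv⟩, by apply Fin.ext; rfl⟩
    · rintro ⟨i, rfl⟩
      exact i.isLt
  rw [himg, Finset.sum_image]
  intro i _ j _ hij
  have := congrArg Fin.val hij
  exact Fin.ext this

lemma sum_right (hl : 1 ≤ l) (h : Fin (l + l + k + 1) → ℝ) :
    ∑ v ∈ Finset.univ.filter (fun v : Fin (l + l + k + 1) => l < v.val ∧ v.val ≤ l + l), h v
      = ∑ i : Fin l, h ⟨l + l - i.val, by omega⟩ := by
  have himg : Finset.univ.filter (fun v : Fin (l + l + k + 1) => l < v.val ∧ v.val ≤ l + l)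
      = Finset.image (fun i : Fin l => (⟨l + l - i.val, by omega⟩ : Fin (l + l + k + 1)))
          Finset.univ := by
    ext v
    simp only [Finset.mem_filter, Finset.mem_univ, true_and, Finset.mem_image]
    constructor
    · intro hv
      refine ⟨⟨l + l - v.val, by omega⟩, ?_⟩
      apply Fin.ext
      have e1 : ((⟨l + l - v.val, by omega⟩ : Fin l) : ℕ) = l + l - v.val := rfl
      have e2 : ∀ hh, ((⟨l + l - (l + l - v.val), hh⟩ : Fin (l + l + k + 1)) : ℕ)
          = l + l - (l + l - v.val) := fun _ => rfl
      rw [e2]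
      omega
    · rintro ⟨i, rfl⟩
      have hi := i.isLt
      have e : ∀ hh, ((⟨l + l - i.val, hh⟩ : Fin (l + l + k + 1)) : ℕ) = l + l - i.val :=
        fun _ => rfl
      rw [e]
      omega
  rw [himg, Finset.sum_image]
  intro i _ j _ hij
  have hi := i.isLt
  have hj := j.isLt
  have := congrArg Fin.val hij
  simp only [] at this
  apply Fin.ext
  omega

end Split

section QuadSplit
variable {l k : ℕ}

lemma catRow_left' (x : Fin (l + l + k + 1) → ℝ) (j : ℕ) (hj : j < l) (hN : j < l + l + k + 1) :
    (SimpleGraph.adjMatrix ℝ (caterpillar l l k) *ᵥ x) ⟨j, hN⟩ =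
      ext0 x (j + 1) + (if j = 0 then 0 else ext0 x (j - 1)) :=
  catRow_left x ⟨j, hN⟩ hj

lemma catRow_right' (x : Fin (l + l + k + 1) → ℝ) (j : ℕ) (hj1 : l < j) (hj2 : j ≤ l + l)
    (hN : j < l + l + k + 1) :
    (SimpleGraph.adjMatrix ℝ (caterpillar l l k) *ᵥ x) ⟨j, hN⟩ =
      (if j = l + l then 0 else ext0 x (j + 1)) + ext0 x (j - 1) :=
  catRow_right x ⟨j, hN⟩ hj1 hj2

lemma quadC_split (hl : 1 ≤ l) (x : Fin (l + l + k + 1) → ℝ)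
    (hc : x ⟨l, by omega⟩ = 0) :
    x ⬝ᵥ (SimpleGraph.adjMatrix ℝ (caterpillar l l k) *ᵥ x) ≤
      lam (pathG l) 1 * (x ⬝ᵥ x) := by
  have ht0 : 0 ≤ lam (pathG l) 1 := lam_path_nonneg hl
  have hcext : ext0 x l = 0 := by
    rw [ext0_lt x (show l < l + l + k + 1 by omega)]
    exact hc
  set xL : Fin l → ℝ := fun i => x ⟨i.val, by omega⟩ with hxL
  set xR : Fin l → ℝ := fun i => x ⟨l + l - i.val, by omega⟩ with hxR
  set sL := Finset.univ.filter (fun v : Fin (l + l + k + 1) => v.val < l) with hsL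
  set sR := Finset.univ.filter
    (fun v : Fin (l + l + k + 1) => l < v.val ∧ v.val ≤ l + l) with hsR
  have hdisj : Disjoint sL sR := by
    rw [Finset.disjoint_left]
    intro a ha hb
    simp only [hsL, hsR, Finset.mem_filter, Finset.mem_univ, true_and] at ha hb
    omega
  have hQ : x ⬝ᵥ (SimpleGraph.adjMatrix ℝ (caterpillar l l k) *ᵥ x) =
      (∑ v ∈ sL, x v * (SimpleGraph.adjMatrix ℝ (caterpillar l l k) *ᵥ x) v) +
      (∑ v ∈ sR, x v * (SimpleGraph.adjMatrix ℝ (caterpillar l l k) *ᵥ x) v) := by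
    rw [show x ⬝ᵥ (SimpleGraph.adjMatrix ℝ (caterpillar l l k) *ᵥ x) =
      ∑ v, x v * (SimpleGraph.adjMatrix ℝ (caterpillar l l k) *ᵥ x) v from rfl]
    rw [← Finset.sum_union hdisj]
    refine (Finset.sum_subset (Finset.subset_univ _) ?_).symm
    intro v _ hv
    simp only [hsL, hsR, Finset.mem_union, Finset.mem_filter, Finset.mem_univ, true_and] at hv
    push_neg at hv
    by_cases hvc : v.val = l
    · have hve : v = ⟨l, by omega⟩ := Fin.ext hvc
      rw [hve, hc, zero_mul]
    · have hleaf : l + l < v.val := by omega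
      rw [catRow_leaf hl x v hleaf, hcext, mul_zero]
  have hextL : ∀ j : ℕ, j ≤ l → ext0 x j = ext0 xL j := by
    intro j hj
    rcases Nat.lt_or_ge j l with h | h
    · rw [ext0_lt x (by omega), ext0_lt xL h]
    · have hjl : j = l := by omega
      subst hjl
      rw [hcext, ext0_ge xL (by omega)]
  have hL : ∑ v ∈ sL, x v * (SimpleGraph.adjMatrix ℝ (caterpillar l l k) *ᵥ x) v
      = xL ⬝ᵥ (SimpleGraph.adjMatrix ℝ (pathG l) *ᵥ xL) := by
    rw [hsL, sum_left hl (fun v => x v * (SimpleGraph.adjMatrix ℝ (caterpillar l l k) *ᵥ x) v)]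
    rw [show xL ⬝ᵥ (SimpleGraph.adjMatrix ℝ (pathG l) *ᵥ xL)
      = ∑ i : Fin l, xL i * (SimpleGraph.adjMatrix ℝ (pathG l) *ᵥ xL) i from rfl]
    refine Finset.sum_congr rfl fun i _ => ?_
    have hi := i.isLt
    rw [catRow_left' x i.val hi (by omega), pathRow xL i]
    rw [hextL (i.val + 1) (by omega)]
    by_cases h0 : i.val = 0
    · rw [if_pos h0, if_pos h0]
    · rw [if_neg h0, if_neg h0, hextL (i.val - 1) (by omega)]
  have hR : ∑ v ∈ sR, x v * (SimpleGraph.adjMatrix ℝ (caterpillar l l k) *ᵥ x) v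
      = xR ⬝ᵥ (SimpleGraph.adjMatrix ℝ (pathG l) *ᵥ xR) := by
    rw [hsR, sum_right hl (fun v => x v * (SimpleGraph.adjMatrix ℝ (caterpillar l l k) *ᵥ x) v)]
    rw [show xR ⬝ᵥ (SimpleGraph.adjMatrix ℝ (pathG l) *ᵥ xR)
      = ∑ i : Fin l, xR i * (SimpleGraph.adjMatrix ℝ (pathG l) *ᵥ xR) i from rfl]
    refine Finset.sum_congr rfl fun i _ => ?_
    have hi := i.isLt
    rw [catRow_right' x (l + l - i.val) (by omega) (by omega) (by omega), pathRow xR i]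
    have h1 : ext0 x (l + l - i.val - 1) = ext0 xR (i.val + 1) := by
      by_cases h : i.val + 1 < l
      · rw [ext0_lt xR h, show l + l - i.val - 1 = l + l - (i.val + 1) from by omega]
        exact ext0_lt x (by omega)
      · rw [ext0_ge xR (by omega), show l + l - i.val - 1 = l from by omega, hcext]
    have h2 : (if l + l - i.val = l + l then (0:ℝ) else ext0 x (l + l - i.val + 1))
        = (if i.val = 0 then (0:ℝ) else ext0 xR (i.val - 1)) := by
      by_cases h : i.val = 0
      · rw [if_pos (by omega : l + l - i.val = l + l), if_pos h]
      · rw [if_neg (by omega : ¬ l + l - i.val = l + l), if_neg h,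
          ext0_lt xR (by omega : i.val - 1 < l),
          show l + l - i.val + 1 = l + l - (i.val - 1) from by omega]
        exact ext0_lt x (by omega)
    rw [h1, h2, add_comm (if i.val = 0 then (0:ℝ) else ext0 xR (i.val - 1))]
  have hsq : (xL ⬝ᵥ xL) + (xR ⬝ᵥ xR) ≤ x ⬝ᵥ x := by
    have e1 : ∑ v ∈ sL, x v * x v = xL ⬝ᵥ xL := by
      rw [hsL, sum_left hl (fun v => x v * x v)]
      rfl
    have e2 : ∑ v ∈ sR, x v * x v = xR ⬝ᵥ xR := by
      rw [hsR, sum_right hl (fun v => x v * x v)]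
      rfl
    rw [← e1, ← e2, ← Finset.sum_union hdisj]
    rw [show x ⬝ᵥ x = ∑ v, x v * x v from rfl]
    exact Finset.sum_le_sum_of_subset_of_nonneg (Finset.subset_univ _)
      (fun v _ _ => mul_self_nonneg _)
  calc x ⬝ᵥ (SimpleGraph.adjMatrix ℝ (caterpillar l l k) *ᵥ x)
      = xL ⬝ᵥ (SimpleGraph.adjMatrix ℝ (pathG l) *ᵥ xL)
        + xR ⬝ᵥ (SimpleGraph.adjMatrix ℝ (pathG l) *ᵥ xR) := by rw [hQ, hL, hR]
    _ ≤ lam (pathG l) 1 * (xL ⬝ᵥ xL) + lam (pathG l) 1 * (xR ⬝ᵥ xR) :=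
        add_le_add (lam1_ub (pathG l) xL) (lam1_ub (pathG l) xR)
    _ = lam (pathG l) 1 * ((xL ⬝ᵥ xL) + (xR ⬝ᵥ xR)) := by ring
    _ ≤ lam (pathG l) 1 * (x ⬝ᵥ x) := mul_le_mul_of_nonneg_left hsq ht0

end QuadSplit


section Mirror
variable {l k : ℕ}

def mirror (l k : ℕ) (f : Fin l → ℝ) : Fin (l + l + k + 1) → ℝ := fun v =>
  if h : v.val < l then f ⟨v.val, h⟩
  else if v.val ≤ l + l then -(ext0 f (l + l - v.val)) else 0

lemma mirror_lt {f : Fin l → ℝ} {v : Fin (l + l + k + 1)} (hv : v.val < l) :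
    mirror l k f v = f ⟨v.val, hv⟩ := dif_pos hv

lemma mirror_mid {f : Fin l → ℝ} {v : Fin (l + l + k + 1)} (hv1 : l ≤ v.val)
    (hv2 : v.val ≤ l + l) : mirror l k f v = -(ext0 f (l + l - v.val)) := by
  rw [mirror, dif_neg (by omega), if_pos hv2]

lemma mirror_center {f : Fin l → ℝ} {v : Fin (l + l + k + 1)} (hv : v.val = l) :
    mirror l k f v = 0 := by
  rw [mirror_mid (by omega) (by omega), hv, show l + l - l = l from by omega,
    ext0_ge f (by omega), neg_zero]

lemma mirror_leaf {f : Fin l → ℝ} {v : Fin (l + l + k + 1)} (hv : l + l < v.val) :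
    mirror l k f v = 0 := by
  rw [mirror, dif_neg (by omega), if_neg (by omega)]

lemma mirror_lt' (f : Fin l → ℝ) (j : ℕ) (hj : j < l) (hN : j < l + l + k + 1) :
    mirror l k f ⟨j, hN⟩ = f ⟨j, hj⟩ := mirror_lt hj

lemma mirror_mid' (f : Fin l → ℝ) (j : ℕ) (hj1 : l ≤ j) (hj2 : j ≤ l + l)
    (hN : j < l + l + k + 1) : mirror l k f ⟨j, hN⟩ = -(ext0 f (l + l - j)) :=
  mirror_mid hj1 hj2

lemma pathEq' {f : Fin l → ℝ} {t : ℝ}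
    (hf : SimpleGraph.adjMatrix ℝ (pathG l) *ᵥ f = t • f) (j : ℕ) (hj : j < l) :
    ext0 f (j + 1) + (if j = 0 then 0 else ext0 f (j - 1)) = t * f ⟨j, hj⟩ :=
  pathEq hf ⟨j, hj⟩

lemma mirror_eig (hl : 1 ≤ l) {f : Fin l → ℝ} {t : ℝ}
    (hf : SimpleGraph.adjMatrix ℝ (pathG l) *ᵥ f = t • f) :
    SimpleGraph.adjMatrix ℝ (caterpillar l l k) *ᵥ (mirror l k f) = t • (mirror l k f) := by
  funext v
  have hN := v.isLt
  set g := mirror l k f with hgdef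
  have hsmul : (t • g) v = t * g v := rfl
  have hge : ∀ (j : ℕ) (hj : j ≤ l), ext0 g j = ext0 f j := by
    intro j hj
    rcases Nat.lt_or_ge j l with h | h
    · rw [ext0_lt g (by omega), ext0_lt f h, hgdef, mirror_lt' f j h]
    · have hjl : j = l := by omega
      subst hjl
      rw [ext0_lt g (by omega), hgdef, mirror_center rfl, ext0_ge f (by omega)]
  by_cases hv1 : v.val < l
  · rw [catRow_left g v hv1, hsmul, hgdef, mirror_lt hv1]
    rw [hge (v.val + 1) (by omega)]
    by_cases h0 : v.val = 0
    · rw [if_pos h0]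
      have := pathEq' hf v.val hv1
      rw [if_pos h0] at this
      exact this
    · rw [if_neg h0, hge (v.val - 1) (by omega)]
      have := pathEq' hf v.val hv1
      rw [if_neg h0] at this
      exact this
  · by_cases hv2 : v.val = l
    · rw [catRow_center hl g v hv2 (fun z hz => mirror_leaf hz), hsmul,
        hgdef, mirror_center hv2, mul_zero]
      have e1 : ext0 g (l - 1) = ext0 f (l - 1) := hge (l - 1) (by omega)
      have e2 : ext0 g (l + 1) = -(ext0 f (l - 1)) := by
        rw [ext0_lt g (by omega : l + 1 < l + l + k + 1), hgdef,
          mirror_mid' f (l + 1) (by omega) (by omega),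
          show l + l - (l + 1) = l - 1 from by omega]
      rw [e1, e2]
      ring
    · by_cases hv3 : v.val ≤ l + l
      · rw [catRow_right g v (by omega) hv3, hsmul]
        set i0 := l + l - v.val with hi0def
        have hi0 : i0 < l := by omega
        have e_g : g v = -(ext0 f i0) := by
          rw [hgdef, mirror_mid (by omega) hv3]
        have e_up : ext0 g (v.val - 1) = -(ext0 f (i0 + 1)) := by
          rw [ext0_lt g (by omega : v.val - 1 < l + l + k + 1), hgdef,
            mirror_mid' f (v.val - 1) (by omega) (by omega),
            show l + l - (v.val - 1) = i0 + 1 from by omega]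
        have e_down : (if v.val = l + l then (0:ℝ) else ext0 g (v.val + 1))
            = -(if i0 = 0 then (0:ℝ) else ext0 f (i0 - 1)) := by
          by_cases h : v.val = l + l
          · rw [if_pos h, if_pos (by omega), neg_zero]
          · rw [if_neg h, if_neg (by omega : ¬ i0 = 0),
              ext0_lt g (by omega : v.val + 1 < l + l + k + 1), hgdef,
              mirror_mid' f (v.val + 1) (by omega) (by omega),
              show l + l - (v.val + 1) = i0 - 1 from by omega]
        rw [e_up, e_down, e_g]
        have hp := pathEq' hf i0 hi0
        have hfi : ext0 f i0 = f ⟨i0, hi0⟩ := ext0_lt f hi0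
        rw [hfi]
        linarith [hp]
      · rw [catRow_leaf hl g v (by omega), hsmul, hgdef, mirror_leaf (by omega), mul_zero]
        rw [hge l (le_refl l), ext0_ge f (by omega)]

lemma mirror_ne (hl : 1 ≤ l) {f : Fin l → ℝ} (hf0 : f ≠ 0) :
    mirror l k f ≠ (0 : Fin (l + l + k + 1) → ℝ) := by
  obtain ⟨i, hi⟩ := Function.ne_iff.mp hf0
  intro h0
  apply hi
  have h1 := congrFun h0 ⟨i.val, by omega⟩
  rw [mirror_lt' f i.val i.isLt] at h1
  simpa using h1


lemma fapp_congr {m : ℕ} (f : Fin m → ℝ) {a b : ℕ} (hab : a = b) (ha : a < m) (hb : b < m) :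
    f ⟨a, ha⟩ = f ⟨b, hb⟩ := by subst hab; rfl

lemma path_last_ne (hl : 1 ≤ l) {f : Fin l → ℝ} {t : ℝ}
    (hf : SimpleGraph.adjMatrix ℝ (pathG l) *ᵥ f = t • f) (hf0 : f ≠ 0) :
    f ⟨l - 1, by omega⟩ ≠ 0 := by
  intro h0
  have hall : ∀ j, j ≤ l - 1 → f ⟨l - 1 - j, by omega⟩ = 0 := by
    intro j
    induction j using Nat.strong_induction_on with
    | _ j ih =>
      intro hj
      rcases Nat.eq_or_lt_of_le (Nat.zero_le j) with h0j | h0j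
      · exact (fapp_congr f (show l - 1 - j = l - 1 from by omega) (by omega) (by omega)).trans h0
      · have hj1 : j - 1 ≤ l - 1 := by omega
        have hp := pathEq' hf (l - 1 - (j - 1)) (by omega)
        have hz1 : f ⟨l - 1 - (j - 1), by omega⟩ = 0 := ih (j - 1) (by omega) hj1
        have hz2 : ext0 f (l - 1 - (j - 1) + 1) = 0 := by
          rcases Nat.lt_or_ge (l - 1 - (j - 1) + 1) l with h | h
          · rw [ext0_lt f h]
            have := ih (j - 2) (by omega) (by omega)
            exact (fapp_congr f (show l - 1 - (j - 1) + 1 = l - 1 - (j - 2) from by omega)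
              h (by omega)).trans this
          · exact ext0_ge f (by omega)
        have hne : ¬ (l - 1 - (j - 1) = 0) := by omega
        rw [hz1, hz2, if_neg hne, mul_zero, zero_add] at hp
        rw [show l - 1 - (j - 1) - 1 = l - 1 - j from by omega] at hp
        rw [← ext0_lt f (by omega : l - 1 - j < l)]
        exact hp
  apply hf0
  funext i
  have hi := i.isLt
  have h2 := hall (l - 1 - i.val) (by omega)
  have h3 : f i = f ⟨l - 1 - (l - 1 - i.val), by omega⟩ :=
    fapp_congr f (by omega) (by omega) (by omega)
  rw [h3]
  exact h2

lemma cat_gt (hl : 1 ≤ l) :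
    ∃ x : Fin (l + l + k + 1) → ℝ,
      lam (pathG l) 1 * (x ⬝ᵥ x) <
        x ⬝ᵥ (SimpleGraph.adjMatrix ℝ (caterpillar l l k) *ᵥ x) := by
  set t := lam (pathG l) 1 with htdef
  obtain ⟨f, hf0, hf⟩ := lam1_eigvec (pathG l) hl
  set g : Fin (l + l + k + 1) → ℝ := mirror l k f with hgdef
  have hge : SimpleGraph.adjMatrix ℝ (caterpillar l l k) *ᵥ g = t • g := mirror_eig hl hf
  set c : Fin (l + l + k + 1) := ⟨l, by omega⟩ with hcdef
  set F : ℝ := |f ⟨l - 1, by omega⟩| with hFdef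
  have hFpos : 0 < F := abs_pos.mpr (path_last_ne hl hf hf0)
  have ht0 : 0 ≤ t := lam_path_nonneg hl
  set eps : ℝ := F / (t + 1) with hepsdef
  have hepspos : 0 < eps := div_pos hFpos (by linarith)
  set y : Fin (l + l + k + 1) → ℝ := fun v => |g v| with hydef
  set z : Fin (l + l + k + 1) → ℝ := eps • (Pi.single c (1:ℝ) : Fin (l + l + k + 1) → ℝ)
    with hzdef
  refine ⟨y + z, ?_⟩
  set A := SimpleGraph.adjMatrix ℝ (caterpillar l l k) with hAdef
  have hyc : y c = 0 := by
    rw [hydef]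
    show |g c| = 0
    rw [hgdef, mirror_center rfl, abs_zero]
  have hyy : y ⬝ᵥ y = g ⬝ᵥ g := by
    refine Finset.sum_congr rfl fun v _ => ?_
    show y v * y v = g v * g v
    rw [hydef]
    exact abs_mul_abs_self _
  have hAsingle : A *ᵥ (Pi.single c (1:ℝ) : Fin (l + l + k + 1) → ℝ) = fun v => A v c := by
    rw [Matrix.mulVec_single]
    funext v
    simp
  have hcross : y ⬝ᵥ (fun v => A v c) = (A *ᵥ y) c := by
    show ∑ v, y v * A v c = ∑ u, A c u * y u
    refine Finset.sum_congr rfl fun v _ => ?_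
    rw [hAdef, adjM_symm, mul_comm]
  have hzz : (Pi.single c (1:ℝ) : Fin (l + l + k + 1) → ℝ) ⬝ᵥ (fun v => A v c) = 0 := by
    rw [single_dotProduct, one_mul, hAdef]
    simp [SimpleGraph.adjMatrix_apply]
  have hzy : (Pi.single c (1:ℝ) : Fin (l + l + k + 1) → ℝ) ⬝ᵥ (A *ᵥ y) = (A *ᵥ y) c := by
    rw [single_dotProduct, one_mul]
  have hyz : y ⬝ᵥ (Pi.single c (1:ℝ) : Fin (l + l + k + 1) → ℝ) = 0 := by
    rw [dotProduct_single, mul_one, hyc]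
  have hzy' : (Pi.single c (1:ℝ) : Fin (l + l + k + 1) → ℝ) ⬝ᵥ y = 0 := by
    rw [single_dotProduct, one_mul, hyc]
  have hz1 : (Pi.single c (1:ℝ) : Fin (l + l + k + 1) → ℝ) ⬝ᵥ
      (Pi.single c (1:ℝ) : Fin (l + l + k + 1) → ℝ) = 1 := by
    rw [single_dotProduct, one_mul, Pi.single_eq_same]
  -- expand the quadratic form
  have hquad : (y + z) ⬝ᵥ (A *ᵥ (y + z))
      = y ⬝ᵥ (A *ᵥ y) + 2 * eps * (A *ᵥ y) c := by
    rw [Matrix.mulVec_add, hzdef, Matrix.mulVec_smul, hAsingle]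
    rw [dotProduct_add, add_dotProduct, add_dotProduct]
    rw [dotProduct_smul, smul_dotProduct, smul_dotProduct,
      dotProduct_smul]
    rw [hcross, hzz, hzy]
    simp only [smul_eq_mul]
    ring
  have hnorm : (y + z) ⬝ᵥ (y + z) = y ⬝ᵥ y + eps ^ 2 := by
    rw [dotProduct_add, add_dotProduct, add_dotProduct, hzdef]
    rw [dotProduct_smul, smul_dotProduct, smul_dotProduct,
      dotProduct_smul]
    rw [hyz, hzy', hz1]
    simp only [smul_eq_mul]
    ring
  have hyAy : t * (y ⬝ᵥ y) ≤ y ⬝ᵥ (A *ᵥ y) := by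
    have h1 := quad_abs_ge (caterpillar l l k) g
    have h2 : g ⬝ᵥ (A *ᵥ g) = t * (g ⬝ᵥ g) := by
      rw [hge, dotProduct_smul, smul_eq_mul]
    rw [hyy]
    calc t * (g ⬝ᵥ g) = g ⬝ᵥ (A *ᵥ g) := h2.symm
      _ ≤ (fun v => |g v|) ⬝ᵥ (A *ᵥ (fun v => |g v|)) := h1
      _ = y ⬝ᵥ (A *ᵥ y) := rfl
  have hAyc : F ≤ (A *ᵥ y) c := by
    have hcv : (c : Fin (l + l + k + 1)).val = l := rfl
    have hterm : A c ⟨l - 1, by omega⟩ * y ⟨l - 1, by omega⟩ = F := by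
      rw [hAdef, entry_adj (cat_adj_nat c (l - 1) (by omega) (by omega))]
      rw [hydef]
      show |g ⟨l - 1, _⟩| = F
      rw [hgdef, mirror_lt' f (l - 1) (by omega), hFdef]
    rw [show (A *ᵥ y) c = ∑ u, A c u * y u from rfl, ← hterm]
    refine Finset.single_le_sum (f := fun u => A c u * y u) (fun u _ => ?_) (Finset.mem_univ _)
    exact mul_nonneg (by rw [hAdef]; exact adjM_nonneg _ _ _) (abs_nonneg _)
  have heq : eps * (t + 1) = F := by
    rw [hepsdef]
    field_simp
  have harith : t * eps ^ 2 < 2 * eps * F := by nlinarith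
  rw [hquad, hnorm]
  nlinarith [mul_le_mul_of_nonneg_left hAyc (by linarith : (0:ℝ) ≤ 2 * eps)]

end Mirror

end PartB

end Aux

/-- For even `d ≥ 2` and `n ≥ d + 1`, the caterpillar `C(d/2, d/2, n−d−1)` satisfies
`λ₂ = λ₁(P_{d/2})`. -/
theorem stmt_15 (d n : ℕ) (hd : 2 ≤ d) (he : Even d) (hn : d + 1 ≤ n) :
    lam (caterpillar (d / 2) (d / 2) (n - d - 1)) 2 = lam (pathG (d / 2)) 1 := by
  set l := d / 2 with hldef
  set k := n - d - 1 with hkdef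
  have hl : 1 ≤ l := by omega
  refine lam2_eq (caterpillar l l k) (lam (pathG l) 1) ⟨l, by omega⟩ (by omega) ?_ ?_ ?_
  · obtain ⟨f, hf0, hf⟩ := lam1_eigvec (pathG l) hl
    exact ⟨mirror l k f, mirror_ne hl hf0, mirror_eig hl hf⟩
  · exact cat_gt hl
  · intro x hx
    exact quadC_split hl x hx

end
end
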